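/- For a square matrix M over a commutative ring R of prime characteristic p (i.e., p • 1 = 0 in R), the trace satisfies tr(M^p) = tr(M)^p. -/

import Mathlib

open Polynomial Matrix

section aux

variable {n : ℕ} {R : Type*} [CommRing R]

theorem matPolyEquiv_eq_X_pow_sub_C' (k : ℕ) (M : Matrix (Fin n) (Fin n) R) :
    matPolyEquiv ((expand R k : R[X] →+* R[X]).mapMatrix (charmatrix (M ^ k))) =
      X ^ k - C (M ^ k) := by
  ext m i j
  rw [coeff_sub, coeff_C, matPolyEquiv_coeff_apply, RingHom.mapMatrix_apply, Matrix.map_apply,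
    AlgHom.coe_toRingHom, Matrix.sub_apply, coeff_X_pow]
  by_cases hij : i = j
  · rw [hij, charmatrix_apply_eq, map_sub, expand_C, expand_X, coeff_sub, coeff_X_pow, coeff_C]
    split_ifs with mp m0 <;> simp only [Matrix.one_apply_eq, Matrix.zero_apply]
  · rw [charmatrix_apply_ne _ _ _ hij, map_neg, expand_C, coeff_neg, coeff_C]
    split_ifs with m0 mp <;>
      simp only [hij, zero_sub, Matrix.zero_apply, sub_zero, neg_zero, Matrix.one_apply_ne, Ne,
        not_false_iff]

theorem expand_charpoly_pow_char {p : ℕ} (hp : p.Prime) [CharP R p] [Nonempty (Fin n)]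
    (M : Matrix (Fin n) (Fin n) R) :
    (expand R p) ((M ^ p).charpoly) = M.charpoly ^ p := by
  haveI : Fact p.Prime := ⟨hp⟩
  have key : (expand R p : R[X] →+* R[X]).mapMatrix (charmatrix (M ^ p)) = charmatrix M ^ p := by
    apply matPolyEquiv.injective
    rw [map_pow, matPolyEquiv_charmatrix, matPolyEquiv_eq_X_pow_sub_C' p M,
      C_pow, ← sub_pow_char_of_commute p (commute_X (C M))]
  unfold Matrix.charpoly
  have hdet : (expand R p) (M ^ p).charmatrix.det
      = ((expand R p : R[X] →+* R[X]).mapMatrix (M ^ p).charmatrix).det :=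
    (expand R p : R[X] →+* R[X]).map_det _
  rw [hdet, key, Matrix.det_pow]

end aux

/-- Over a commutative ring of prime characteristic `p`, `tr(M^p) = tr(M)^p`. -/
theorem trace_pow_char {p : ℕ} (hp : p.Prime) {R : Type*} [CommRing R] [CharP R p]
    {n : ℕ} (M : Matrix (Fin n) (Fin n) R) :
    (M ^ p).trace = M.trace ^ p := by
  haveI : Fact p.Prime := ⟨hp⟩
  rcases Nat.eq_zero_or_pos n with rfl | hn
  · simp [Matrix.trace, zero_pow hp.ne_zero]
  haveI : Nonempty (Fin n) := ⟨⟨0, hn⟩⟩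
  have h1 := expand_charpoly_pow_char hp M
  have h2 := congrArg (fun q : R[X] => q.coeff (p * (n - 1))) h1
  simp only [coeff_expand_mul' hp.pos] at h2
  rw [← map_frobenius_expand, coeff_map, coeff_expand_mul' hp.pos, frobenius_def] at h2
  rw [Matrix.trace_eq_neg_charpoly_coeff, Matrix.trace_eq_neg_charpoly_coeff,
    Fintype.card_fin] at *
  rw [h2, neg_pow, neg_one_pow_char, neg_one_mul]
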